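/- Let y ∈ ℝⁿ and λ_L ≥ 0, λ_NI ≥ 0, and let 0 ≤ λ_F < λ_F*. If the unique minimizer of the one-dimensional fused lasso nearly-isotonic objective satisfies β̂(y, λ_F, λ_L, λ_NI)_i = β̂(y, λ_F, λ_L, λ_NI)_{i+1} for some index 1 ≤ i ≤ n−1, then also β̂(y, λ_F*, λ_L, λ_NI)_i = β̂(y, λ_F*, λ_L, λ_NI)_{i+1}; that is, increasing the fusion parameter λ_F can only join constant regions of the solution, not split them. -/

import Mathlib

set_option maxHeartbeats 1600000

open Finset

/-- The one-dimensional fused lasso nearly-isotonic objective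
`F(β) = (1/2)Σᵢ(yᵢ−βᵢ)² + λ_F Σᵢ|βᵢ−βᵢ₊₁| + λ_L Σᵢ|βᵢ| + λ_NI Σᵢ max(βᵢ−βᵢ₊₁,0)`. -/
noncomputable def flni1 {n : ℕ} (y : Fin (n + 1) → ℝ) (lF lL lNI : ℝ)
    (β : Fin (n + 1) → ℝ) : ℝ :=
  (1 / 2) * ∑ i, (y i - β i) ^ 2
    + lF * ∑ i : Fin n, |β i.castSucc - β i.succ|
    + lL * ∑ i, |β i|
    + lNI * ∑ i : Fin n, max (β i.castSucc - β i.succ) 0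

namespace FLNIproof

noncomputable def pen (lF lNI x : ℝ) : ℝ := lF * |x| + lNI * max x 0

noncomputable def obj (n : ℕ) (Y : ℕ → ℝ) (lF lL lNI : ℝ) (B : ℕ → ℝ) : ℝ :=
  (1/2) * ∑ j ∈ Finset.range (n+1), (Y j - B j)^2
  + ∑ k ∈ Finset.range n, pen lF lNI (B k - B (k+1))
  + lL * ∑ j ∈ Finset.range (n+1), |B j|

noncomputable def loF (n : ℕ) (B : ℕ → ℝ) (lF lNI : ℝ) : ℕ → ℝ := fun k =>
  if k = 0 ∨ n + 1 ≤ k then 0 else if 0 < B (k-1) - B k then lF + lNI else -lF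

noncomputable def hiF (n : ℕ) (B : ℕ → ℝ) (lF lNI : ℝ) : ℕ → ℝ := fun k =>
  if k = 0 ∨ n + 1 ≤ k then 0 else if B (k-1) - B k < 0 then -lF else lF + lNI

noncomputable def mloF (B : ℕ → ℝ) (lL : ℝ) : ℕ → ℝ := fun j =>
  if 0 < B j then lL else -lL

noncomputable def mhiF (B : ℕ → ℝ) (lL : ℝ) : ℕ → ℝ := fun j =>
  if B j < 0 then -lL else lL

lemma abs_up {x t : ℝ} (ht : 0 < t) (hx : x < 0 → t ≤ -x) :
    |x + t| - |x| = if x < 0 then -t else t := by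
  rcases lt_or_ge x 0 with h | h
  · rw [if_pos h, abs_of_neg h, abs_of_nonpos (by linarith [hx h])]; ring
  · rw [if_neg (not_lt.mpr h), abs_of_nonneg h, abs_of_nonneg (by linarith)]; ring

lemma abs_down {x t : ℝ} (ht : 0 < t) (hx : 0 < x → t ≤ x) :
    |x - t| - |x| = if 0 < x then -t else t := by
  rcases lt_or_ge 0 x with h | h
  · rw [if_pos h, abs_of_pos h, abs_of_nonneg (by linarith [hx h])]; ring
  · rw [if_neg (not_lt.mpr h), abs_of_nonpos h, abs_of_nonpos (by linarith)]; ring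

lemma pen_up {lF lNI x t : ℝ} (ht : 0 < t) (hx : x < 0 → t ≤ -x) :
    pen lF lNI (x + t) - pen lF lNI x = t * (if x < 0 then -lF else lF + lNI) := by
  unfold pen
  rcases lt_or_ge x 0 with h | h
  · rw [if_pos h, abs_of_neg h, abs_of_nonpos (by linarith [hx h]),
      max_eq_right (by linarith [hx h] : x + t ≤ 0), max_eq_right h.le]
    ring
  · rw [if_neg (not_lt.mpr h), abs_of_nonneg h, abs_of_nonneg (by linarith),
      max_eq_left (by linarith : (0:ℝ) ≤ x + t), max_eq_left h]
    ring

lemma pen_down {lF lNI x t : ℝ} (ht : 0 < t) (hx : 0 < x → t ≤ x) :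
    pen lF lNI (x - t) - pen lF lNI x = -t * (if 0 < x then lF + lNI else -lF) := by
  unfold pen
  rcases lt_or_ge 0 x with h | h
  · rw [if_pos h, abs_of_pos h, abs_of_nonneg (by linarith [hx h]),
      max_eq_left (by linarith [hx h] : (0:ℝ) ≤ x - t), max_eq_left h.le]
    ring
  · rw [if_neg (not_lt.mpr h), abs_of_nonpos h, abs_of_nonpos (by linarith),
      max_eq_right (by linarith : x - t ≤ 0), max_eq_right h]
    ring



lemma lo_le_hi {n : ℕ} {B : ℕ → ℝ} {lF lNI : ℝ} (hF : 0 ≤ lF) (hNI : 0 ≤ lNI) (k : ℕ) :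
    loF n B lF lNI k ≤ hiF n B lF lNI k := by
  unfold loF hiF
  by_cases hb : k = 0 ∨ n + 1 ≤ k
  · rw [if_pos hb, if_pos hb]
  · rw [if_neg hb, if_neg hb]
    by_cases h1 : 0 < B (k-1) - B k
    · rw [if_pos h1, if_neg (by linarith)]
    · rw [if_neg h1]
      by_cases h2 : B (k-1) - B k < 0
      · rw [if_pos h2]
      · rw [if_neg h2]; linarith

lemma lo_ge {n : ℕ} {B : ℕ → ℝ} {lF lNI : ℝ} (hF : 0 ≤ lF) (hNI : 0 ≤ lNI) (k : ℕ) :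
    -lF ≤ loF n B lF lNI k := by
  unfold loF
  by_cases hb : k = 0 ∨ n + 1 ≤ k
  · rw [if_pos hb]; linarith
  · rw [if_neg hb]
    by_cases h1 : 0 < B (k-1) - B k
    · rw [if_pos h1]; linarith
    · rw [if_neg h1]

lemma hi_le {n : ℕ} {B : ℕ → ℝ} {lF lNI : ℝ} (hF : 0 ≤ lF) (hNI : 0 ≤ lNI) (k : ℕ) :
    hiF n B lF lNI k ≤ lF + lNI := by
  unfold hiF
  by_cases hb : k = 0 ∨ n + 1 ≤ k
  · rw [if_pos hb]; linarith
  · rw [if_neg hb]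
    by_cases h1 : B (k-1) - B k < 0
    · rw [if_pos h1]; linarith
    · rw [if_neg h1]

lemma mlo_le_mhi {B : ℕ → ℝ} {lL : ℝ} (hL : 0 ≤ lL) (j : ℕ) :
    mloF B lL j ≤ mhiF B lL j := by
  unfold mloF mhiF
  by_cases h1 : 0 < B j
  · rw [if_pos h1, if_neg (by linarith)]
  · rw [if_neg h1]
    by_cases h2 : B j < 0
    · rw [if_pos h2]
    · rw [if_neg h2]; linarith



noncomputable def ext {n : ℕ} (β : Fin (n+1) → ℝ) : ℕ → ℝ := fun j =>
  if h : j < n + 1 then β ⟨j, h⟩ else 0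

lemma ext_val {n : ℕ} (β : Fin (n+1) → ℝ) (j : ℕ) (h : j < n + 1) :
    ext β j = β ⟨j, h⟩ := dif_pos h

lemma ext_fin {n : ℕ} (β : Fin (n+1) → ℝ) (i : Fin (n+1)) : ext β (i : ℕ) = β i := by
  rw [ext_val β _ i.isLt]

lemma flni1_eq_obj {n : ℕ} (y : Fin (n+1) → ℝ) (lF lL lNI : ℝ) (β : Fin (n+1) → ℝ) :
    flni1 y lF lL lNI β = obj n (ext y) lF lL lNI (ext β) := by
  unfold flni1 obj
  have h1 : ∑ i : Fin (n+1), (y i - β i)^2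
      = ∑ j ∈ Finset.range (n+1), (ext y j - ext β j)^2 := by
    rw [← Fin.sum_univ_eq_sum_range]
    exact Finset.sum_congr rfl fun i _ => by rw [ext_fin, ext_fin]
  have h2 : ∑ i : Fin (n+1), |β i| = ∑ j ∈ Finset.range (n+1), |ext β j| := by
    rw [← Fin.sum_univ_eq_sum_range]
    exact Finset.sum_congr rfl fun i _ => by rw [ext_fin]
  have hc : ∀ i : Fin n, β i.castSucc = ext β (i : ℕ) := by
    intro i
    rw [ext_val β _ (by omega : (i:ℕ) < n+1)]
    exact congrArg β (Fin.ext (by simp))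
  have hs : ∀ i : Fin n, β i.succ = ext β ((i : ℕ) + 1) := by
    intro i
    rw [ext_val β _ (by omega : (i:ℕ)+1 < n+1)]
    exact congrArg β (Fin.ext (by simp))
  have h3 : ∑ i : Fin n, |β i.castSucc - β i.succ|
      = ∑ k ∈ Finset.range n, |ext β k - ext β (k+1)| := by
    rw [← Fin.sum_univ_eq_sum_range]
    exact Finset.sum_congr rfl fun i _ => by rw [hc, hs]
  have h4 : ∑ i : Fin n, max (β i.castSucc - β i.succ) 0
      = ∑ k ∈ Finset.range n, max (ext β k - ext β (k+1)) 0 := by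
    rw [← Fin.sum_univ_eq_sum_range]
    exact Finset.sum_congr rfl fun i _ => by rw [hc, hs]
  have h5 : ∑ k ∈ Finset.range n, pen lF lNI (ext β k - ext β (k+1))
      = lF * ∑ k ∈ Finset.range n, |ext β k - ext β (k+1)|
        + lNI * ∑ k ∈ Finset.range n, max (ext β k - ext β (k+1)) 0 := by
    unfold pen
    rw [Finset.sum_add_distrib, Finset.mul_sum, Finset.mul_sum]
  rw [h1, h2, h3, h4, h5]
  ring

lemma obj_ext_restrict {n : ℕ} (Y : ℕ → ℝ) (lF lL lNI : ℝ) (C : ℕ → ℝ) :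
    obj n Y lF lL lNI (ext (fun i : Fin (n+1) => C (i : ℕ))) = obj n Y lF lL lNI C := by
  unfold obj
  have hv : ∀ j, j < n + 1 → ext (fun i : Fin (n+1) => C (i : ℕ)) j = C j := by
    intro j hj; rw [ext_val _ _ hj]
  congr 1
  · congr 1
    · congr 1
      exact Finset.sum_congr rfl fun j hj => by
        rw [hv j (Finset.mem_range.mp hj)]
    · exact Finset.sum_congr rfl fun k hk => by
        have := Finset.mem_range.mp hk
        rw [hv k (by omega), hv (k+1) (by omega)]
  · congr 1
    exact Finset.sum_congr rfl fun j hj => by rw [hv j (Finset.mem_range.mp hj)]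

lemma min_transfer {n : ℕ} (y : Fin (n+1) → ℝ) (lF lL lNI : ℝ) (b : Fin (n+1) → ℝ)
    (hb : ∀ β, flni1 y lF lL lNI b ≤ flni1 y lF lL lNI β) :
    ∀ C : ℕ → ℝ, obj n (ext y) lF lL lNI (ext b) ≤ obj n (ext y) lF lL lNI C := by
  intro C
  have := hb (fun i => C (i : ℕ))
  rw [flni1_eq_obj, flni1_eq_obj, obj_ext_restrict] at this
  exact this



lemma objDiff (n : ℕ) (Y B : ℕ → ℝ) (lF lL lNI t : ℝ) (c d : ℕ) (hcd : c ≤ d) (hdn : d ≤ n) :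
    obj n Y lF lL lNI (fun j => if c ≤ j ∧ j ≤ d then B j + t else B j)
      - obj n Y lF lL lNI B
    = (1/2) * (∑ j ∈ Finset.Icc c d, (t^2 - 2*t*(Y j - B j)))
      + lL * (∑ j ∈ Finset.Icc c d, (|B j + t| - |B j|))
      + ((if 1 ≤ c then pen lF lNI (B (c-1) - B c - t) - pen lF lNI (B (c-1) - B c) else 0)
      + (if d < n then pen lF lNI (B d + t - B (d+1)) - pen lF lNI (B d - B (d+1)) else 0)) := by
  set C : ℕ → ℝ := fun j => if c ≤ j ∧ j ≤ d then B j + t else B j with hCdef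
  have hCin : ∀ j, c ≤ j → j ≤ d → C j = B j + t := by
    intro j h1 h2; simp only [hCdef]; rw [if_pos ⟨h1, h2⟩]
  have hCout : ∀ j, ¬(c ≤ j ∧ j ≤ d) → C j = B j := by
    intro j h; simp only [hCdef]; rw [if_neg h]
  have hsub : Finset.Icc c d ⊆ Finset.range (n+1) := by
    intro x hx; rw [Finset.mem_range]; have := Finset.mem_Icc.mp hx; omega
  have hq : ∑ j ∈ Finset.range (n+1), (Y j - C j)^2
      - ∑ j ∈ Finset.range (n+1), (Y j - B j)^2
      = ∑ j ∈ Finset.Icc c d, (t^2 - 2*t*(Y j - B j)) := by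
    rw [← Finset.sum_sub_distrib]
    rw [← Finset.sum_subset hsub (by
      intro x _ hx2
      have hx3 : ¬(c ≤ x ∧ x ≤ d) := fun hh => hx2 (Finset.mem_Icc.mpr hh)
      rw [hCout x hx3]; ring)]
    refine Finset.sum_congr rfl fun j hj => ?_
    have := Finset.mem_Icc.mp hj
    rw [hCin j this.1 this.2]; ring
  have ha : ∑ j ∈ Finset.range (n+1), |C j| - ∑ j ∈ Finset.range (n+1), |B j|
      = ∑ j ∈ Finset.Icc c d, (|B j + t| - |B j|) := by
    rw [← Finset.sum_sub_distrib]
    rw [← Finset.sum_subset hsub (by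
      intro x _ hx2
      have hx3 : ¬(c ≤ x ∧ x ≤ d) := fun hh => hx2 (Finset.mem_Icc.mpr hh)
      rw [hCout x hx3]; ring)]
    refine Finset.sum_congr rfl fun j hj => ?_
    have := Finset.mem_Icc.mp hj
    rw [hCin j this.1 this.2]
  have hp : ∑ k ∈ Finset.range n, pen lF lNI (C k - C (k+1))
      - ∑ k ∈ Finset.range n, pen lF lNI (B k - B (k+1))
      = ((if 1 ≤ c then pen lF lNI (B (c-1) - B c - t) - pen lF lNI (B (c-1) - B c) else 0)
      + (if d < n then pen lF lNI (B d + t - B (d+1)) - pen lF lNI (B d - B (d+1)) else 0)) := by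
    rw [← Finset.sum_sub_distrib]
    have hgz : ∀ k, k + 1 ≠ c → k ≠ d →
        pen lF lNI (C k - C (k+1)) - pen lF lNI (B k - B (k+1)) = 0 := by
      intro k h1 h2
      have : C k - C (k+1) = B k - B (k+1) := by
        rcases (by omega : (¬(c ≤ k ∧ k ≤ d) ∧ ¬(c ≤ k+1 ∧ k+1 ≤ d))
            ∨ ((c ≤ k ∧ k ≤ d) ∧ (c ≤ k+1 ∧ k+1 ≤ d))) with ⟨o1, o2⟩ | ⟨⟨i1, i2⟩, ⟨i3, i4⟩⟩
        · rw [hCout k o1, hCout (k+1) o2]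
        · rw [hCin k i1 i2, hCin (k+1) i3 i4]; ring
      rw [this, sub_self]
    have hgc : 1 ≤ c → pen lF lNI (C (c-1) - C c) - pen lF lNI (B (c-1) - B c)
        = pen lF lNI (B (c-1) - B c - t) - pen lF lNI (B (c-1) - B c) := by
      intro hc1
      have e0 : C (c-1) = B (c-1) := hCout _ (by omega)
      have e1 : C c = B c + t := hCin c le_rfl hcd
      rw [e0, e1]
      have : B (c-1) - (B c + t) = B (c-1) - B c - t := by ring
      rw [this]
    have hgd : d < n → pen lF lNI (C d - C (d+1)) - pen lF lNI (B d - B (d+1))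
        = pen lF lNI (B d + t - B (d+1)) - pen lF lNI (B d - B (d+1)) := by
      intro _
      have e0 : C d = B d + t := hCin d hcd le_rfl
      have e1 : C (d+1) = B (d+1) := hCout _ (by omega)
      rw [e0, e1]
    rcases Nat.lt_or_ge c 1 with hc0 | hc1
    · have hc0' : c = 0 := by omega
      rcases eq_or_lt_of_le hdn with hdn' | hdn'
      · -- c = 0, d = n : all terms vanish
        rw [Finset.sum_eq_zero (by
          intro k hk
          have hkn := Finset.mem_range.mp hk
          have : C k - C (k+1) = B k - B (k+1) := by
            rw [hCin k (by omega) (by omega), hCin (k+1) (by omega) (by omega)]; ring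
          rw [this, sub_self])]
        rw [if_neg (by omega), if_neg (by omega)]
        ring
      · -- c = 0, d < n : only edge d
        rw [← Finset.sum_subset (by
            intro x hx
            rw [Finset.mem_range]
            rw [Finset.mem_singleton] at hx
            omega : ({d} : Finset ℕ) ⊆ Finset.range n) (by
          intro x _ hx2
          rw [Finset.mem_singleton] at hx2
          exact hgz x (by omega) hx2)]
        rw [Finset.sum_singleton, hgd hdn']
        rw [if_neg (by omega), if_pos hdn']
        ring
    · rcases eq_or_lt_of_le hdn with hdn' | hdn'
      · -- 1 ≤ c, d = n : only edge c-1
        rw [← Finset.sum_subset (by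
            intro x hx
            rw [Finset.mem_range]
            rw [Finset.mem_singleton] at hx
            omega : ({c-1} : Finset ℕ) ⊆ Finset.range n) (by
          intro x hx hx2
          rw [Finset.mem_singleton] at hx2
          have hxn := Finset.mem_range.mp hx
          exact hgz x (by omega) (by omega))]
        rw [Finset.sum_singleton]
        have : c - 1 + 1 = c := by omega
        rw [this] -- may rewrite inside C (c-1+1)
        rw [hgc hc1]
        rw [if_pos hc1, if_neg (by omega)]
        ring
      · -- 1 ≤ c, d < n : edges c-1 and d
        have hne : c - 1 ≠ d := by omega
        rw [← Finset.sum_subset (by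
            intro x hx
            rw [Finset.mem_range]
            rw [Finset.mem_insert, Finset.mem_singleton] at hx
            omega : ({c-1, d} : Finset ℕ) ⊆ Finset.range n) (by
          intro x _ hx2
          rw [Finset.mem_insert, Finset.mem_singleton] at hx2
          push_neg at hx2
          exact hgz x (by omega) hx2.2)]
        rw [Finset.sum_pair hne]
        have e1 : c - 1 + 1 = c := by omega
        rw [e1, hgc hc1, hgd hdn']
        rw [if_pos hc1, if_pos hdn']
  have expand : obj n Y lF lL lNI C - obj n Y lF lL lNI B
      = (1/2) * (∑ j ∈ Finset.range (n+1), (Y j - C j)^2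
          - ∑ j ∈ Finset.range (n+1), (Y j - B j)^2)
        + (∑ k ∈ Finset.range n, pen lF lNI (C k - C (k+1))
          - ∑ k ∈ Finset.range n, pen lF lNI (B k - B (k+1)))
        + lL * (∑ j ∈ Finset.range (n+1), |C j| - ∑ j ∈ Finset.range (n+1), |B j|) := by
    unfold obj; ring
  rw [expand, hq, ha, hp]
  ring



lemma kkt (n : ℕ) (Y B : ℕ → ℝ) (lF lL lNI : ℝ)
    (hF : 0 ≤ lF) (hL : 0 ≤ lL) (hNI : 0 ≤ lNI)
    (hmin : ∀ C, obj n Y lF lL lNI B ≤ obj n Y lF lL lNI C) :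
    ∃ γ : ℕ → ℝ, γ 0 = 0 ∧ γ (n+1) = 0 ∧
      (∀ k, 1 ≤ k → k ≤ n → loF n B lF lNI k ≤ γ k ∧ γ k ≤ hiF n B lF lNI k) ∧
      (∀ j, j ≤ n → mloF B lL j ≤ γ j + (Y j - B j) - γ (j+1)
        ∧ γ j + (Y j - B j) - γ (j+1) ≤ mhiF B lL j) := by
  classical
  -- the small step size
  set t0 : ℝ := (Finset.range (n+2)).inf' ⟨0, by simp⟩
    (fun j => min (if B j = 0 then 1 else |B j|)
      (if B j - B (j+1) = 0 then 1 else |B j - B (j+1)|)) with ht0def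
  have ht0pos : 0 < t0 := by
    rw [ht0def]; refine (Finset.lt_inf'_iff ..).2 ?_
    intro j _
    apply lt_min
    · by_cases h : B j = 0
      · rw [if_pos h]; norm_num
      · rw [if_neg h]; exact abs_pos.mpr h
    · by_cases h : B j - B (j+1) = 0
      · rw [if_pos h]; norm_num
      · rw [if_neg h]; exact abs_pos.mpr h
  have ht0B : ∀ j, j < n + 2 → B j ≠ 0 → t0 ≤ |B j| := by
    intro j hj hBj
    refine le_trans (Finset.inf'_le _ (Finset.mem_range.mpr hj)) ?_
    refine le_trans (min_le_left _ _) ?_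
    rw [if_neg hBj]
  have ht0G : ∀ j, j < n + 2 → B j - B (j+1) ≠ 0 → t0 ≤ |B j - B (j+1)| := by
    intro j hj hBj
    refine le_trans (Finset.inf'_le _ (Finset.mem_range.mpr hj)) ?_
    refine le_trans (min_le_right _ _) ?_
    rw [if_neg hBj]
  -- window inequalities
  have Wp : ∀ c k, c ≤ k → k ≤ n + 1 →
      ∑ j ∈ Finset.Ico c k, (Y j - B j - mhiF B lL j)
        ≤ hiF n B lF lNI k - loF n B lF lNI c := by
    intro c k h1 h2
    rcases eq_or_lt_of_le h1 with rfl | hlt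
    · rw [Finset.Ico_self, Finset.sum_empty]
      linarith [lo_le_hi (n := n) (B := B) hF hNI c]
    · obtain ⟨d, rfl⟩ : ∃ d, k = d + 1 := ⟨k - 1, by omega⟩
      have hcd : c ≤ d := by omega
      have hdn : d ≤ n := by omega
      by_contra hK
      push_neg at hK
      set Sw : ℝ := ∑ j ∈ Finset.Icc c d, (Y j - B j) with hSw
      set Sm : ℝ := ∑ j ∈ Finset.Icc c d, mhiF B lL j with hSm
      have hsum : ∑ j ∈ Finset.Ico c (d+1), (Y j - B j - mhiF B lL j) = Sw - Sm := by
        rw [Finset.Ico_add_one_right_eq_Icc, Finset.sum_sub_distrib]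
      rw [hsum] at hK
      set K : ℝ := hiF n B lF lNI (d+1) - loF n B lF lNI c - (Sw - Sm) with hKdef
      have hKneg : K < 0 := by rw [hKdef]; linarith
      set m : ℕ := d + 1 - c with hm
      have hmpos : 0 < m := by omega
      have hmR : (0:ℝ) < (m:ℝ) := by exact_mod_cast hmpos
      set t : ℝ := min t0 (-K / m) with htdef
      have ht : 0 < t := lt_min ht0pos (div_pos (by linarith) hmR)
      have htt0 : t ≤ t0 := min_le_left _ _
      have htm : t * m ≤ -K := by
        have h := min_le_right t0 (-K / m)
        calc t * (m:ℝ) ≤ (-K / m) * m := mul_le_mul_of_nonneg_right h (le_of_lt hmR)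
        _ = -K := by field_simp
      have hobj := hmin (fun j => if c ≤ j ∧ j ≤ d then B j + t else B j)
      have hdiff := objDiff n Y B lF lL lNI t c d hcd hdn
      have h0 : (0:ℝ) ≤ (1/2) * (∑ j ∈ Finset.Icc c d, (t^2 - 2*t*(Y j - B j)))
          + lL * (∑ j ∈ Finset.Icc c d, (|B j + t| - |B j|))
          + ((if 1 ≤ c then pen lF lNI (B (c-1) - B c - t) - pen lF lNI (B (c-1) - B c) else 0)
          + (if d < n then pen lF lNI (B d + t - B (d+1)) - pen lF lNI (B d - B (d+1)) else 0)) := by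
        rw [← hdiff]; linarith
      have EA : ∑ j ∈ Finset.Icc c d, (t^2 - 2*t*(Y j - B j)) = m * t^2 - 2*t*Sw := by
        rw [Finset.sum_sub_distrib, Finset.sum_const, Nat.card_Icc, ← Finset.mul_sum]
        rw [nsmul_eq_mul, ← hm, hSw]
      have EB : lL * (∑ j ∈ Finset.Icc c d, (|B j + t| - |B j|)) = t * Sm := by
        rw [hSm, Finset.mul_sum, Finset.mul_sum]
        refine Finset.sum_congr rfl fun j hj => ?_
        have hjd := Finset.mem_Icc.mp hj
        have habs : |B j + t| - |B j| = if B j < 0 then -t else t := by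
          refine abs_up ht fun h => ?_
          refine le_trans htt0 ?_
          have := ht0B j (by omega) (by linarith)
          rwa [abs_of_neg h] at this
        rw [habs]
        unfold mhiF
        by_cases h : B j < 0
        · rw [if_pos h, if_pos h]; ring
        · rw [if_neg h, if_neg h]; ring
      have EC : (if 1 ≤ c then pen lF lNI (B (c-1) - B c - t) - pen lF lNI (B (c-1) - B c) else 0)
          = -t * loF n B lF lNI c := by
        by_cases hc : 1 ≤ c
        · rw [if_pos hc]
          have hgap : 0 < B (c-1) - B c → t ≤ B (c-1) - B c := by
            intro h
            refine le_trans htt0 ?_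
            have h2 : B (c-1) - B (c-1+1) ≠ 0 := by
              have : c - 1 + 1 = c := by omega
              rw [this]; linarith
            have := ht0G (c-1) (by omega) h2
            have h3 : c - 1 + 1 = c := by omega
            rw [h3] at this
            rwa [abs_of_pos h] at this
          rw [pen_down ht hgap]
          unfold loF
          rw [if_neg (by omega : ¬(c = 0 ∨ n + 1 ≤ c))]
        · rw [if_neg hc]
          unfold loF
          rw [if_pos (by omega : c = 0 ∨ n + 1 ≤ c)]
          ring
      have ED : (if d < n then pen lF lNI (B d + t - B (d+1)) - pen lF lNI (B d - B (d+1)) else 0)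
          = t * hiF n B lF lNI (d+1) := by
        by_cases hd : d < n
        · rw [if_pos hd]
          have e1 : B d + t - B (d+1) = (B d - B (d+1)) + t := by ring
          rw [e1]
          have hgap : B d - B (d+1) < 0 → t ≤ -(B d - B (d+1)) := by
            intro h
            refine le_trans htt0 ?_
            have := ht0G d (by omega) (by linarith)
            rwa [abs_of_neg h] at this
          rw [pen_up ht hgap]
          unfold hiF
          rw [if_neg (by omega : ¬(d + 1 = 0 ∨ n + 1 ≤ d + 1))]
          have : d + 1 - 1 = d := by omega
          rw [this]
        · rw [if_neg hd]
          unfold hiF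
          rw [if_pos (by omega : d + 1 = 0 ∨ n + 1 ≤ d + 1)]
          ring
      rw [EA, EB, EC, ED] at h0
      -- 0 ≤ (1/2)(m t² - 2 t Sw) + t Sm - t lo + t hi = m t²/2 + t K
      have hfin : (0:ℝ) ≤ m * t^2 / 2 + t * K := by
        rw [hKdef]; linarith [h0]
      have h1 : (m:ℝ) * t^2 ≤ (-K) * t := by
        calc (m:ℝ) * t^2 = (t * m) * t := by ring
        _ ≤ (-K) * t := mul_le_mul_of_nonneg_right htm ht.le
      have h2 : t * K < 0 := mul_neg_of_pos_of_neg ht hKneg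
      have hcomm : (-K) * t = -(t * K) := by ring
      rw [hcomm] at h1
      clear_value Sw Sm K m t
      linarith
  have Wm : ∀ c k, c ≤ k → k ≤ n + 1 →
      loF n B lF lNI k - hiF n B lF lNI c
        ≤ ∑ j ∈ Finset.Ico c k, (Y j - B j - mloF B lL j) := by
    intro c k h1 h2
    rcases eq_or_lt_of_le h1 with rfl | hlt
    · rw [Finset.Ico_self, Finset.sum_empty]
      linarith [lo_le_hi (n := n) (B := B) hF hNI c]
    · obtain ⟨d, rfl⟩ : ∃ d, k = d + 1 := ⟨k - 1, by omega⟩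
      have hcd : c ≤ d := by omega
      have hdn : d ≤ n := by omega
      by_contra hK
      push_neg at hK
      set Sw : ℝ := ∑ j ∈ Finset.Icc c d, (Y j - B j) with hSw
      set Sm : ℝ := ∑ j ∈ Finset.Icc c d, mloF B lL j with hSm
      have hsum : ∑ j ∈ Finset.Ico c (d+1), (Y j - B j - mloF B lL j) = Sw - Sm := by
        rw [Finset.Ico_add_one_right_eq_Icc, Finset.sum_sub_distrib]
      rw [hsum] at hK
      set K : ℝ := (Sw - Sm) - (loF n B lF lNI (d+1) - hiF n B lF lNI c) with hKdef
      have hKneg : K < 0 := by rw [hKdef]; linarith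
      set m : ℕ := d + 1 - c with hm
      have hmpos : 0 < m := by omega
      have hmR : (0:ℝ) < (m:ℝ) := by exact_mod_cast hmpos
      set s : ℝ := min t0 (-K / m) with htdef
      have hs : 0 < s := lt_min ht0pos (div_pos (by linarith) hmR)
      have hst0 : s ≤ t0 := min_le_left _ _
      have hsm : s * m ≤ -K := by
        have h := min_le_right t0 (-K / m)
        calc s * (m:ℝ) ≤ (-K / m) * m := mul_le_mul_of_nonneg_right h (le_of_lt hmR)
        _ = -K := by field_simp
      have hobj := hmin (fun j => if c ≤ j ∧ j ≤ d then B j + (-s) else B j)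
      have hdiff := objDiff n Y B lF lL lNI (-s) c d hcd hdn
      have h0 : (0:ℝ) ≤ (1/2) * (∑ j ∈ Finset.Icc c d, ((-s)^2 - 2*(-s)*(Y j - B j)))
          + lL * (∑ j ∈ Finset.Icc c d, (|B j + (-s)| - |B j|))
          + ((if 1 ≤ c then pen lF lNI (B (c-1) - B c - (-s)) - pen lF lNI (B (c-1) - B c) else 0)
          + (if d < n then pen lF lNI (B d + (-s) - B (d+1)) - pen lF lNI (B d - B (d+1)) else 0)) := by
        rw [← hdiff]; linarith
      have EA : ∑ j ∈ Finset.Icc c d, ((-s)^2 - 2*(-s)*(Y j - B j)) = m * s^2 + 2*s*Sw := by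
        rw [Finset.sum_sub_distrib, Finset.sum_const, Nat.card_Icc, ← Finset.mul_sum]
        rw [nsmul_eq_mul, ← hm, hSw]; ring
      have EB : lL * (∑ j ∈ Finset.Icc c d, (|B j + (-s)| - |B j|)) = -s * Sm := by
        rw [hSm, Finset.mul_sum, Finset.mul_sum]
        refine Finset.sum_congr rfl fun j hj => ?_
        have hjd := Finset.mem_Icc.mp hj
        have e1 : B j + (-s) = B j - s := by ring
        rw [e1]
        have habs : |B j - s| - |B j| = if 0 < B j then -s else s := by
          refine abs_down hs fun h => ?_
          refine le_trans hst0 ?_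
          have := ht0B j (by omega) (by linarith)
          rwa [abs_of_pos h] at this
        rw [habs]
        unfold mloF
        by_cases h : 0 < B j
        · rw [if_pos h, if_pos h]; ring
        · rw [if_neg h, if_neg h]; ring
      have EC : (if 1 ≤ c then pen lF lNI (B (c-1) - B c - (-s)) - pen lF lNI (B (c-1) - B c) else 0)
          = s * hiF n B lF lNI c := by
        by_cases hc : 1 ≤ c
        · rw [if_pos hc]
          have e1 : B (c-1) - B c - (-s) = (B (c-1) - B c) + s := by ring
          rw [e1]
          have hgap : B (c-1) - B c < 0 → s ≤ -(B (c-1) - B c) := by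
            intro h
            refine le_trans hst0 ?_
            have h2 : B (c-1) - B (c-1+1) ≠ 0 := by
              have : c - 1 + 1 = c := by omega
              rw [this]; linarith
            have := ht0G (c-1) (by omega) h2
            have h3 : c - 1 + 1 = c := by omega
            rw [h3] at this
            rwa [abs_of_neg h] at this
          rw [pen_up hs hgap]
          unfold hiF
          rw [if_neg (by omega : ¬(c = 0 ∨ n + 1 ≤ c))]
        · rw [if_neg hc]
          unfold hiF
          rw [if_pos (by omega : c = 0 ∨ n + 1 ≤ c)]
          ring
      have ED : (if d < n then pen lF lNI (B d + (-s) - B (d+1)) - pen lF lNI (B d - B (d+1)) else 0)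
          = -s * loF n B lF lNI (d+1) := by
        by_cases hd : d < n
        · rw [if_pos hd]
          have e1 : B d + (-s) - B (d+1) = (B d - B (d+1)) - s := by ring
          rw [e1]
          have hgap : 0 < B d - B (d+1) → s ≤ B d - B (d+1) := by
            intro h
            refine le_trans hst0 ?_
            have := ht0G d (by omega) (by linarith)
            rwa [abs_of_pos h] at this
          rw [pen_down hs hgap]
          unfold loF
          rw [if_neg (by omega : ¬(d + 1 = 0 ∨ n + 1 ≤ d + 1))]
          have : d + 1 - 1 = d := by omega
          rw [this]
        · rw [if_neg hd]
          unfold loF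
          rw [if_pos (by omega : d + 1 = 0 ∨ n + 1 ≤ d + 1)]
          ring
      rw [EA, EB, EC, ED] at h0
      have hfin : (0:ℝ) ≤ m * s^2 / 2 + s * K := by
        rw [hKdef]; linarith [h0]
      have h1 : (m:ℝ) * s^2 ≤ (-K) * s := by
        calc (m:ℝ) * s^2 = (s * m) * s := by ring
        _ ≤ (-K) * s := mul_le_mul_of_nonneg_right hsm hs.le
      have h2 : s * K < 0 := mul_neg_of_pos_of_neg hs hKneg
      have hcomm : (-K) * s = -(s * K) := by ring
      rw [hcomm] at h1
      clear_value Sw Sm K m s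
      linarith
  -- envelopes
  set u : ℕ → ℝ := fun j => Y j - B j - mhiF B lL j with hu
  set v : ℕ → ℝ := fun j => Y j - B j - mloF B lL j with hv
  have huv : ∀ a bnd, ∑ j ∈ Finset.Ico a bnd, u j ≤ ∑ j ∈ Finset.Ico a bnd, v j := by
    intro a bnd
    refine Finset.sum_le_sum fun j _ => ?_
    simp only [hu, hv]
    have := mlo_le_mhi (B := B) (lL := lL) hL j
    linarith
  have hne : ∀ k : ℕ, (insert (n+1) (Finset.Icc k (n+1))).Nonempty :=
    fun k => ⟨n+1, Finset.mem_insert_self _ _⟩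
  set Hi : ℕ → ℝ := fun k => (insert (n+1) (Finset.Icc k (n+1))).inf' (hne k)
      (fun cc => hiF n B lF lNI cc - ∑ j ∈ Finset.Ico k cc, u j) with hHidef
  set Lo : ℕ → ℝ := fun k => (insert (n+1) (Finset.Icc k (n+1))).sup' (hne k)
      (fun dd => loF n B lF lNI dd - ∑ j ∈ Finset.Ico k dd, v j) with hLodef
  have hmem : ∀ k cc, k ≤ cc → cc ≤ n+1 → cc ∈ insert (n+1) (Finset.Icc k (n+1)) :=
    fun k cc h1 h2 => Finset.mem_insert_of_mem (Finset.mem_Icc.mpr ⟨h1, h2⟩)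
  have hmem' : ∀ k cc, cc ∈ insert (n+1) (Finset.Icc k (n+1)) → k ≤ n+1 →
      k ≤ cc ∧ cc ≤ n+1 := by
    intro k cc hcc hk
    rcases Finset.mem_insert.mp hcc with rfl | hcc2
    · exact ⟨hk, le_rfl⟩
    · exact Finset.mem_Icc.mp hcc2
  have hHile : ∀ k cc, k ≤ cc → cc ≤ n+1 →
      Hi k ≤ hiF n B lF lNI cc - ∑ j ∈ Finset.Ico k cc, u j := by
    intro k cc h1 h2
    rw [hHidef]
    exact Finset.inf'_le _ (hmem k cc h1 h2)
  have hleHi : ∀ k x, k ≤ n+1 →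
      (∀ cc, k ≤ cc → cc ≤ n+1 → x ≤ hiF n B lF lNI cc - ∑ j ∈ Finset.Ico k cc, u j) →
      x ≤ Hi k := by
    intro k x hk h
    rw [hHidef]
    refine Finset.le_inf' _ _ fun cc hcc => ?_
    obtain ⟨h1, h2⟩ := hmem' k cc hcc hk
    exact h cc h1 h2
  have hLole : ∀ k dd, k ≤ dd → dd ≤ n+1 →
      loF n B lF lNI dd - ∑ j ∈ Finset.Ico k dd, v j ≤ Lo k := by
    intro k dd h1 h2
    rw [hLodef]
    exact Finset.le_sup' (f := fun dd => loF n B lF lNI dd - ∑ j ∈ Finset.Ico k dd, v j)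
      (hmem k dd h1 h2)
  have hLoge : ∀ k x, k ≤ n+1 →
      (∀ dd, k ≤ dd → dd ≤ n+1 → loF n B lF lNI dd - ∑ j ∈ Finset.Ico k dd, v j ≤ x) →
      Lo k ≤ x := by
    intro k x hk h
    rw [hLodef]
    refine Finset.sup'_le _ _ fun dd hdd => ?_
    obtain ⟨h1, h2⟩ := hmem' k dd hdd hk
    exact h dd h1 h2
  have P1 : ∀ k, k ≤ n+1 → Lo k ≤ Hi k := by
    intro k hk
    refine hLoge k (Hi k) hk fun dd hd1 hd2 => ?_
    refine hleHi k _ hk fun cc hc1 hc2 => ?_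
    rcases le_total dd cc with hdc | hcd2
    · have hsplit : ∑ j ∈ Finset.Ico k dd, u j + ∑ j ∈ Finset.Ico dd cc, u j
          = ∑ j ∈ Finset.Ico k cc, u j := Finset.sum_Ico_consecutive u hd1 hdc
      have hW := Wp dd cc hdc hc2
      have huv' := huv k dd
      simp only [hu] at hW ⊢
      linarith [hsplit, hW, huv']
    · have hsplit : ∑ j ∈ Finset.Ico k cc, v j + ∑ j ∈ Finset.Ico cc dd, v j
          = ∑ j ∈ Finset.Ico k dd, v j := Finset.sum_Ico_consecutive v hc1 hcd2
      have hW := Wm cc dd hcd2 hd2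
      have huv' := huv k cc
      simp only [hv] at hW ⊢
      linarith [hsplit, hW, huv']
  have P2h : ∀ k, k ≤ n+1 → Hi k ≤ hiF n B lF lNI k := by
    intro k hk
    have := hHile k k le_rfl hk
    rwa [Finset.Ico_self, Finset.sum_empty, sub_zero] at this
  have P2l : ∀ k, k ≤ n+1 → loF n B lF lNI k ≤ Lo k := by
    intro k hk
    have := hLole k k le_rfl hk
    rwa [Finset.Ico_self, Finset.sum_empty, sub_zero] at this
  have P3 : ∀ k, k ≤ n → Hi k ≤ Hi (k+1) - u k := by
    intro k hk
    obtain ⟨c0, hc0mem, hc0eq⟩ := Finset.exists_mem_eq_inf' (hne (k+1))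
      (fun cc => hiF n B lF lNI cc - ∑ j ∈ Finset.Ico (k+1) cc, u j)
    obtain ⟨h1, h2⟩ := hmem' (k+1) c0 hc0mem (by omega)
    have hle := hHile k c0 (by omega) h2
    have hsum : ∑ j ∈ Finset.Ico k c0, u j = u k + ∑ j ∈ Finset.Ico (k+1) c0, u j :=
      Finset.sum_eq_sum_Ico_succ_bot (by omega) u
    have hHik1 : Hi (k+1) = hiF n B lF lNI c0 - ∑ j ∈ Finset.Ico (k+1) c0, u j := by
      rw [hHidef]; exact hc0eq
    rw [hHik1]
    linarith [hle, hsum]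
  have P4 : ∀ k, k ≤ n → Lo (k+1) - v k ≤ Lo k := by
    intro k hk
    obtain ⟨d0, hd0mem, hd0eq⟩ := Finset.exists_mem_eq_sup' (hne (k+1))
      (fun dd => loF n B lF lNI dd - ∑ j ∈ Finset.Ico (k+1) dd, v j)
    obtain ⟨h1, h2⟩ := hmem' (k+1) d0 hd0mem (by omega)
    have hle := hLole k d0 (by omega) h2
    have hsum : ∑ j ∈ Finset.Ico k d0, v j = v k + ∑ j ∈ Finset.Ico (k+1) d0, v j :=
      Finset.sum_eq_sum_Ico_succ_bot (by omega) v
    have hLok1 : Lo (k+1) = loF n B lF lNI d0 - ∑ j ∈ Finset.Ico (k+1) d0, v j := by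
      rw [hLodef]; exact hd0eq
    rw [hLok1]
    linarith [hle, hsum]
  have hlo0 : loF n B lF lNI 0 = 0 := if_pos (Or.inl rfl)
  have hhi0 : hiF n B lF lNI 0 = 0 := if_pos (Or.inl rfl)
  have hloN : loF n B lF lNI (n+1) = 0 := if_pos (Or.inr le_rfl)
  have hhiN : hiF n B lF lNI (n+1) = 0 := if_pos (Or.inr le_rfl)
  have P5h : (0:ℝ) ≤ Hi 0 := by
    refine hleHi 0 0 (by omega) fun cc h1 h2 => ?_
    have := Wp 0 cc (by omega) h2
    simp only [hu]
    linarith [this, hlo0]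
  have P5l : Lo 0 ≤ 0 := by
    refine hLoge 0 0 (by omega) fun dd h1 h2 => ?_
    have := Wm 0 dd (by omega) h2
    simp only [hv]
    linarith [this, hhi0]
  have P6h : Hi (n+1) = 0 := by
    refine le_antisymm ?_ ?_
    · have := hHile (n+1) (n+1) le_rfl le_rfl
      rwa [Finset.Ico_self, Finset.sum_empty, sub_zero, hhiN] at this
    · refine hleHi (n+1) 0 le_rfl fun cc h1 h2 => ?_
      have : cc = n+1 := le_antisymm h2 h1
      subst this
      rw [Finset.Ico_self, Finset.sum_empty, sub_zero, hhiN]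
  have P6l : Lo (n+1) = 0 := by
    refine le_antisymm ?_ ?_
    · refine hLoge (n+1) 0 le_rfl fun dd h1 h2 => ?_
      have : dd = n+1 := le_antisymm h2 h1
      subst this
      rw [Finset.Ico_self, Finset.sum_empty, sub_zero, hloN]
    · have := hLole (n+1) (n+1) le_rfl le_rfl
      rwa [Finset.Ico_self, Finset.sum_empty, sub_zero, hloN] at this
  -- construct γ
  set γ : ℕ → ℝ := fun k => Nat.rec (motive := fun _ => ℝ) 0
      (fun k ih => min (Hi (k+1)) (ih + (Y k - B k) - mloF B lL k)) k with hγdef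
  have hγ0 : γ 0 = 0 := rfl
  have hγs : ∀ k, γ (k+1) = min (Hi (k+1)) (γ k + (Y k - B k) - mloF B lL k) := fun k => rfl
  have hinv : ∀ k, k ≤ n+1 → Lo k ≤ γ k ∧ γ k ≤ Hi k := by
    intro k
    induction k with
    | zero =>
      intro _
      rw [hγ0]
      exact ⟨P5l, P5h⟩
    | succ k ih =>
      intro hk1
      have hk : k ≤ n := by omega
      obtain ⟨ih1, ih2⟩ := ih (by omega)
      constructor
      · rw [hγs k]
        refine le_min (P1 (k+1) hk1) ?_
        have h4 := P4 k hk
        have hvk : v k = Y k - B k - mloF B lL k := by simp only [hv]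
        linarith
      · rw [hγs k]
        exact min_le_left _ _
  refine ⟨γ, hγ0, ?_, ?_, ?_⟩
  · have h := hinv (n+1) le_rfl
    have h1 := h.1
    have h2 := h.2
    rw [P6l] at h1
    rw [P6h] at h2
    linarith
  · intro k h1 h2
    have h := hinv k (by omega)
    exact ⟨le_trans (P2l k (by omega)) h.1, le_trans h.2 (P2h k (by omega))⟩
  · intro j hj
    have hup : γ (j+1) ≤ γ j + (Y j - B j) - mloF B lL j := by
      rw [hγs j]; exact min_le_right _ _
    have hdn2 : γ j + (Y j - B j) - mhiF B lL j ≤ γ (j+1) := by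
      rw [hγs j]
      refine le_min ?_ ?_
      · have h3 := P3 j hj
        have hγHi := (hinv j (by omega)).2
        have huk : u j = Y j - B j - mhiF B lL j := by simp only [hu]
        linarith
      · have := mlo_le_mhi (B := B) (lL := lL) hL j
        linarith
    exact ⟨by linarith, by linarith⟩



lemma chain (n e : ℕ) (μ : ℝ) (hμ : 0 < μ) (A B B' : ℕ → ℝ)
    (hA0 : A 0 = 0) (hAend : A (n+1) = 0)
    (he1 : 1 ≤ e) (he2 : e ≤ n)
    (hAe : A e ≤ -μ)
    (hsplit' : ∀ k, 1 ≤ k → k ≤ n → B' (k-1) < B' k → μ ≤ A k)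
    (hsplit : ∀ k, 1 ≤ k → k ≤ n → B k < B (k-1) → -μ ≤ A k)
    (hpos : ∀ j, j ≤ n → A j ≤ A (j+1) → B j ≤ B' j)
    (hneg : ∀ j, j ≤ n → A (j+1) ≤ A j → B' j ≤ B j)
    (hfused : B (e-1) = B e) (hsplitAt : B' e < B' (e-1)) : False := by
  classical
  -- l0 : the largest index ≤ e-1 with A above -μ
  set P : ℕ → Prop := fun j => -μ < A j with hP
  have hP0 : P 0 := by rw [hP]; simp only; rw [hA0]; linarith
  set l0 : ℕ := Nat.findGreatest P (e-1) with hl0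
  have hl0e : l0 ≤ e - 1 := Nat.findGreatest_le _
  have hl0spec : -μ < A l0 := Nat.findGreatest_spec (Nat.zero_le _) hP0
  have hl0gr : ∀ m, l0 < m → m ≤ e - 1 → A m ≤ -μ := by
    intro m hm hme
    by_contra hh
    push_neg at hh
    exact Nat.findGreatest_is_greatest hm hme hh
  have hAle : ∀ m, l0 < m → m ≤ e → A m ≤ -μ := by
    intro m hm hme
    rcases eq_or_lt_of_le hme with rfl | hlt
    · exact hAe
    · exact hl0gr m hm (by omega)
  -- r0 : the least index > e with A above -μ
  have hex : ∃ j, e < j ∧ -μ < A j := ⟨n+1, by omega, by rw [hAend]; linarith⟩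
  set r0 : ℕ := Nat.find hex with hr0
  have hr0spec : e < r0 ∧ -μ < A r0 := Nat.find_spec hex
  have hr0le : r0 ≤ n + 1 := Nat.find_min' hex ⟨by omega, by rw [hAend]; linarith⟩
  have hAri : ∀ m, e < m → m < r0 → A m ≤ -μ := by
    intro m h1 h2
    by_contra hh
    push_neg at hh
    exact Nat.find_min hex h2 ⟨h1, hh⟩
  have hA' : ∀ m, l0 < m → m < r0 → A m ≤ -μ := by
    intro m h1 h2
    rcases le_or_gt m e with hme | hme
    · exact hAle m h1 hme
    · exact hAri m hme h2
  -- c* : largest coordinate in [l0, e-1] where A steps down (weakly)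
  have hcw : l0 ≤ l0 ∧ A (l0+1) ≤ A l0 := by
    refine ⟨le_rfl, ?_⟩
    have : A (l0+1) ≤ -μ := hAle (l0+1) (by omega) (by omega)
    linarith
  set cs : ℕ := Nat.findGreatest (fun j => l0 ≤ j ∧ A (j+1) ≤ A j) (e-1) with hcs
  have hcs_spec : l0 ≤ cs ∧ A (cs+1) ≤ A cs := by
    rw [hcs]
    exact Nat.findGreatest_spec (P := fun j => l0 ≤ j ∧ A (j+1) ≤ A j) hl0e hcw
  have hcse : cs ≤ e - 1 := Nat.findGreatest_le _
  have hcgr : ∀ m, cs < m → m ≤ e - 1 → ¬(l0 ≤ m ∧ A (m+1) ≤ A m) := by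
    intro m h1 h2
    rw [hcs] at h1
    exact Nat.findGreatest_is_greatest h1 h2
  -- d* : smallest coordinate in [e, r0-1] where A steps up (weakly)
  have hdx : ∃ j, e ≤ j ∧ A j ≤ A (j+1) := by
    refine ⟨r0 - 1, by omega, ?_⟩
    have h1 : A (r0-1) ≤ -μ := by
      rcases eq_or_lt_of_le (by omega : e ≤ r0 - 1) with heq | hlt
      · rw [← heq]; exact hAe
      · exact hAri (r0-1) hlt (by omega)
    have h2 : r0 - 1 + 1 = r0 := by omega
    rw [h2]
    linarith [hr0spec.2]
  set ds : ℕ := Nat.find hdx with hds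
  have hds_spec : e ≤ ds ∧ A ds ≤ A (ds+1) := Nat.find_spec hdx
  have hdsr : ds ≤ r0 - 1 := Nat.find_min' hdx (by
    refine ⟨by omega, ?_⟩
    have h1 : A (r0-1) ≤ -μ := by
      rcases eq_or_lt_of_le (by omega : e ≤ r0 - 1) with heq | hlt
      · rw [← heq]; exact hAe
      · exact hAri (r0-1) hlt (by omega)
    have h2 : r0 - 1 + 1 = r0 := by omega
    rw [h2]
    linarith [hr0spec.2])
  have hdmin : ∀ m, m < ds → ¬(e ≤ m ∧ A m ≤ A (m+1)) := fun m hm => Nat.find_min hdx hm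
  -- B is nondecreasing on [cs, e-1]
  have hcsn : cs ≤ n := by omega
  have hdsn : ds ≤ n := by omega
  have M1 : ∀ m, cs ≤ m → m ≤ e - 1 → B cs ≤ B m := by
    intro m
    induction m with
    | zero => exact fun h1 _ => le_of_eq (congrArg B (by omega))
    | succ m ih =>
      intro h1 h2
      rcases eq_or_lt_of_le h1 with heq | hlt
      · rw [heq]
      · have hcm : cs ≤ m := by omega
        have hm2 : m ≤ e - 1 := by omega
        refine le_trans (ih hcm (by omega)) ?_
        by_contra hBB
        push_neg at hBB
        have hsp := hsplit (m+1) (by omega) (by omega) (by simpa using hBB)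
        have hAm1 : A (m+1) ≤ -μ := hA' (m+1) (by omega) (by omega)
        have hAm2 : A (m+2) ≤ -μ := hAle (m+2) (by omega) (by omega)
        exact hcgr (m+1) (by omega) h2 ⟨by omega, by linarith⟩
  -- B is nondecreasing on [e, ds]
  have M2 : ∀ m, e ≤ m → m ≤ ds → B e ≤ B m := by
    intro m
    induction m with
    | zero => exact fun h1 _ => absurd h1 (by omega)
    | succ m ih =>
      intro h1 h2
      rcases eq_or_lt_of_le h1 with heq | hlt
      · rw [heq]
      · have hem : e ≤ m := by omega
        refine le_trans (ih hem (by omega)) ?_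
        by_contra hBB
        push_neg at hBB
        have hsp := hsplit (m+1) (by omega) (by omega) (by simpa using hBB)
        have hAm1 : A (m+1) ≤ -μ := hA' (m+1) (by omega) (by omega)
        have hAm : A m ≤ -μ := by
          rcases eq_or_lt_of_le hem with heq2 | hlt2
          · rw [← heq2]; exact hAe
          · exact hA' m (by omega) (by omega)
        exact hdmin m (by omega) ⟨hem, by linarith⟩
  -- B' is nonincreasing on [cs, ds]
  have M3 : ∀ a, cs ≤ a → ∀ m, a ≤ m → m ≤ ds → B' m ≤ B' a := by
    intro a ha m
    induction m with
    | zero => exact fun h1 _ => le_of_eq (congrArg B' (by omega)).symm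
    | succ m ih =>
      intro h1 h2
      rcases eq_or_lt_of_le h1 with heq | hlt
      · rw [heq]
      · have ham : a ≤ m := by omega
        refine le_trans ?_ (ih ham (by omega))
        by_contra hBB
        push_neg at hBB
        have hsp := hsplit' (m+1) (by omega) (by omega) (by simpa using hBB)
        have hAm1 : A (m+1) ≤ -μ := hA' (m+1) (by omega) (by omega)
        linarith
  -- endpoints
  have hE1 : B' cs ≤ B cs := hneg cs hcsn hcs_spec.2
  have hE2 : B ds ≤ B' ds := hpos ds hdsn hds_spec.2
  -- assemble the contradiction
  have h1 : B cs ≤ B (e-1) := M1 (e-1) (by omega) le_rfl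
  have h2 : B e ≤ B ds := M2 ds hds_spec.1 le_rfl
  have h3 : B' ds ≤ B' e := M3 e (by omega) ds hds_spec.1 le_rfl
  have h4 : B' (e-1) ≤ B' cs := M3 cs le_rfl (e-1) (by omega) (by omega)
  linarith [hfused]


end FLNIproof

/-- Increasing the fusion penalty `λ_F` can only join constant regions of the
one-dimensional fused lasso nearly-isotonic solution, not split them. -/
theorem fusionParam_joins_groups {n : ℕ} (y : Fin (n + 1) → ℝ)
    (lL lNI lF lF' : ℝ) (hL : 0 ≤ lL) (hNI : 0 ≤ lNI) (hF : 0 ≤ lF) (hFF : lF < lF')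
    (b b' : Fin (n + 1) → ℝ)
    (hb : ∀ β, flni1 y lF lL lNI b ≤ flni1 y lF lL lNI β)
    (hb' : ∀ β, flni1 y lF' lL lNI b' ≤ flni1 y lF' lL lNI β)
    (i : Fin n) (hjoin : b i.castSucc = b i.succ) :
    b' i.castSucc = b' i.succ := by
  classical
  have hF' : 0 ≤ lF' := le_trans hF hFF.le
  set μ : ℝ := lF' - lF with hμdef
  have hμ : 0 < μ := by rw [hμdef]; linarith
  set Y : ℕ → ℝ := FLNIproof.ext y with hY
  set Bb : ℕ → ℝ := FLNIproof.ext b with hBb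
  set Bb' : ℕ → ℝ := FLNIproof.ext b' with hBb'
  have hminb := FLNIproof.min_transfer y lF lL lNI b hb
  have hminb' := FLNIproof.min_transfer y lF' lL lNI b' hb'
  obtain ⟨γ, hγ0, hγN, hbox, hτ⟩ := FLNIproof.kkt n Y Bb lF lL lNI hF hL hNI hminb
  obtain ⟨γ', hγ'0, hγ'N, hbox', hτ'⟩ := FLNIproof.kkt n Y Bb' lF' lL lNI hF' hL hNI hminb'
  set e : ℕ := (i : ℕ) + 1 with he
  have hiv : (i : ℕ) < n := i.isLt
  have he1 : 1 ≤ e := by omega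
  have he2 : e ≤ n := by omega
  have hBcast : Bb (e-1) = b i.castSucc := by
    have h1 : e - 1 = (i : ℕ) := by omega
    rw [hBb, h1, FLNIproof.ext_val b _ (by omega)]
    exact congrArg b (Fin.ext (by simp))
  have hBsucc : Bb e = b i.succ := by
    rw [hBb, he, FLNIproof.ext_val b _ (by omega)]
    exact congrArg b (Fin.ext (by simp))
  have hB'cast : Bb' (e-1) = b' i.castSucc := by
    have h1 : e - 1 = (i : ℕ) := by omega
    rw [hBb', h1, FLNIproof.ext_val b' _ (by omega)]
    exact congrArg b' (Fin.ext (by simp))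
  have hB'succ : Bb' e = b' i.succ := by
    rw [hBb', he, FLNIproof.ext_val b' _ (by omega)]
    exact congrArg b' (Fin.ext (by simp))
  have hfusedB : Bb (e-1) = Bb e := by rw [hBcast, hBsucc]; exact hjoin
  -- comparison of the soft-threshold multipliers
  have hτcmp : ∀ j, j ≤ n → Bb' j < Bb j →
      γ' j + (Y j - Bb' j) - γ' (j+1) ≤ γ j + (Y j - Bb j) - γ (j+1) := by
    intro j hj hlt2
    obtain ⟨hτ1, hτ2⟩ := hτ j hj
    obtain ⟨hτ'1, hτ'2⟩ := hτ' j hj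
    simp only [FLNIproof.mloF, FLNIproof.mhiF] at hτ1 hτ2 hτ'1 hτ'2
    rcases lt_or_ge (Bb' j) 0 with hB0 | hB0
    · rw [if_pos hB0] at hτ'2
      by_cases h : 0 < Bb j
      · rw [if_pos h] at hτ1; linarith
      · rw [if_neg h] at hτ1; linarith
    · have h2 : 0 < Bb j := lt_of_le_of_lt hB0 hlt2
      rw [if_pos h2] at hτ1
      rw [if_neg (not_lt.mpr hB0)] at hτ'2
      linarith
  have hτcmp' : ∀ j, j ≤ n → Bb j < Bb' j →
      γ j + (Y j - Bb j) - γ (j+1) ≤ γ' j + (Y j - Bb' j) - γ' (j+1) := by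
    intro j hj hlt2
    obtain ⟨hτ1, hτ2⟩ := hτ j hj
    obtain ⟨hτ'1, hτ'2⟩ := hτ' j hj
    simp only [FLNIproof.mloF, FLNIproof.mhiF] at hτ1 hτ2 hτ'1 hτ'2
    rcases lt_or_ge (Bb j) 0 with hB0 | hB0
    · rw [if_pos hB0] at hτ2
      by_cases h : 0 < Bb' j
      · rw [if_pos h] at hτ'1; linarith
      · rw [if_neg h] at hτ'1; linarith
    · have h2 : 0 < Bb' j := lt_of_le_of_lt hB0 hlt2
      rw [if_pos h2] at hτ'1
      rw [if_neg (not_lt.mpr hB0)] at hτ2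
      linarith
  have hpos : ∀ j, j ≤ n → γ j - γ' j ≤ γ (j+1) - γ' (j+1) → Bb j ≤ Bb' j := by
    intro j hj hA
    by_contra hc
    push_neg at hc
    have h1 := hτcmp j hj hc
    linarith
  have hneg : ∀ j, j ≤ n → γ (j+1) - γ' (j+1) ≤ γ j - γ' j → Bb' j ≤ Bb j := by
    intro j hj hA
    by_contra hc
    push_neg at hc
    have h1 := hτcmp' j hj hc
    linarith
  -- box bounds and pins
  have hboxlo : ∀ k, 1 ≤ k → k ≤ n → -lF ≤ γ k :=
    fun k h1 h2 => le_trans (FLNIproof.lo_ge hF hNI k) (hbox k h1 h2).1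
  have hboxhi : ∀ k, 1 ≤ k → k ≤ n → γ k ≤ lF + lNI :=
    fun k h1 h2 => le_trans (hbox k h1 h2).2 (FLNIproof.hi_le hF hNI k)
  have hboxlo' : ∀ k, 1 ≤ k → k ≤ n → -lF' ≤ γ' k :=
    fun k h1 h2 => le_trans (FLNIproof.lo_ge hF' hNI k) (hbox' k h1 h2).1
  have hboxhi' : ∀ k, 1 ≤ k → k ≤ n → γ' k ≤ lF' + lNI :=
    fun k h1 h2 => le_trans (hbox' k h1 h2).2 (FLNIproof.hi_le hF' hNI k)
  have hpinHi : ∀ k, 1 ≤ k → k ≤ n → 0 < Bb (k-1) - Bb k → γ k = lF + lNI := by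
    intro k h1 h2 hgap
    obtain ⟨hb1, hb2⟩ := hbox k h1 h2
    simp only [FLNIproof.loF] at hb1
    simp only [FLNIproof.hiF] at hb2
    rw [if_neg (by omega : ¬(k = 0 ∨ n + 1 ≤ k)), if_pos hgap] at hb1
    rw [if_neg (by omega : ¬(k = 0 ∨ n + 1 ≤ k)), if_neg (by linarith)] at hb2
    linarith
  have hpinLo : ∀ k, 1 ≤ k → k ≤ n → Bb (k-1) - Bb k < 0 → γ k = -lF := by
    intro k h1 h2 hgap
    obtain ⟨hb1, hb2⟩ := hbox k h1 h2
    simp only [FLNIproof.loF] at hb1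
    simp only [FLNIproof.hiF] at hb2
    rw [if_neg (by omega : ¬(k = 0 ∨ n + 1 ≤ k)), if_neg (by linarith)] at hb1
    rw [if_neg (by omega : ¬(k = 0 ∨ n + 1 ≤ k)), if_pos hgap] at hb2
    linarith
  have hpinHi' : ∀ k, 1 ≤ k → k ≤ n → 0 < Bb' (k-1) - Bb' k → γ' k = lF' + lNI := by
    intro k h1 h2 hgap
    obtain ⟨hb1, hb2⟩ := hbox' k h1 h2
    simp only [FLNIproof.loF] at hb1
    simp only [FLNIproof.hiF] at hb2
    rw [if_neg (by omega : ¬(k = 0 ∨ n + 1 ≤ k)), if_pos hgap] at hb1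
    rw [if_neg (by omega : ¬(k = 0 ∨ n + 1 ≤ k)), if_neg (by linarith)] at hb2
    linarith
  have hpinLo' : ∀ k, 1 ≤ k → k ≤ n → Bb' (k-1) - Bb' k < 0 → γ' k = -lF' := by
    intro k h1 h2 hgap
    obtain ⟨hb1, hb2⟩ := hbox' k h1 h2
    simp only [FLNIproof.loF] at hb1
    simp only [FLNIproof.hiF] at hb2
    rw [if_neg (by omega : ¬(k = 0 ∨ n + 1 ≤ k)), if_neg (by linarith)] at hb1
    rw [if_neg (by omega : ¬(k = 0 ∨ n + 1 ≤ k)), if_pos hgap] at hb2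
    linarith
  by_contra hne
  rcases lt_or_gt_of_ne hne with hlt | hgt
  · -- b' i.castSucc < b' i.succ : apply the chain lemma to the negated data
    have hgap' : Bb' (e-1) - Bb' e < 0 := by rw [hB'cast, hB'succ]; linarith
    refine FLNIproof.chain n e μ hμ (fun k => γ' k - γ k)
      (fun k => -Bb k) (fun k => -Bb' k) ?_ ?_ he1 he2 ?_ ?_ ?_ ?_ ?_ ?_ ?_
    · show γ' 0 - γ 0 = 0
      rw [hγ0, hγ'0]; ring
    · show γ' (n+1) - γ (n+1) = 0
      rw [hγN, hγ'N]; ring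
    · show γ' e - γ e ≤ -μ
      have h1 := hpinLo' e he1 he2 hgap'
      have h2 := hboxlo e he1 he2
      rw [h1, hμdef]
      linarith
    · intro k h1 h2 hlt2
      show μ ≤ γ' k - γ k
      have hlt3 : -Bb' (k-1) < -Bb' k := hlt2
      have hgap2 : 0 < Bb' (k-1) - Bb' k := by linarith
      have hp := hpinHi' k h1 h2 hgap2
      have hq := hboxhi k h1 h2
      rw [hp, hμdef]
      linarith
    · intro k h1 h2 hlt2
      show -μ ≤ γ' k - γ k
      have hlt3 : -Bb k < -Bb (k-1) := hlt2
      have hgap2 : Bb (k-1) - Bb k < 0 := by linarith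
      have hp := hpinLo k h1 h2 hgap2
      have hq := hboxlo' k h1 h2
      rw [hp, hμdef]
      linarith
    · intro j hj hA
      show -Bb j ≤ -Bb' j
      have hA2 : γ' j - γ j ≤ γ' (j+1) - γ (j+1) := hA
      have := hneg j hj (by linarith)
      linarith
    · intro j hj hA
      show -Bb' j ≤ -Bb j
      have hA2 : γ' (j+1) - γ (j+1) ≤ γ' j - γ j := hA
      have := hpos j hj (by linarith)
      linarith
    · show -Bb (e-1) = -Bb e
      rw [hfusedB]
    · show -Bb' e < -Bb' (e-1)
      have h1 : Bb' (e-1) - Bb' e < 0 := hgap'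
      linarith
  · -- b' i.succ < b' i.castSucc : apply the chain lemma directly
    have hgap' : 0 < Bb' (e-1) - Bb' e := by rw [hB'cast, hB'succ]; linarith
    refine FLNIproof.chain n e μ hμ (fun k => γ k - γ' k) Bb Bb' ?_ ?_ he1 he2 ?_ ?_ ?_ ?_ ?_ ?_ ?_
    · show γ 0 - γ' 0 = 0
      rw [hγ0, hγ'0]; ring
    · show γ (n+1) - γ' (n+1) = 0
      rw [hγN, hγ'N]; ring
    · show γ e - γ' e ≤ -μ
      have h1 := hpinHi' e he1 he2 hgap'
      have h2 := hboxhi e he1 he2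
      rw [h1, hμdef]
      linarith
    · intro k h1 h2 hlt2
      show μ ≤ γ k - γ' k
      have hgap2 : Bb' (k-1) - Bb' k < 0 := by linarith
      have hp := hpinLo' k h1 h2 hgap2
      have hq := hboxlo k h1 h2
      rw [hp, hμdef]
      linarith
    · intro k h1 h2 hlt2
      show -μ ≤ γ k - γ' k
      have hgap2 : 0 < Bb (k-1) - Bb k := by linarith
      have hp := hpinHi k h1 h2 hgap2
      have hq := hboxhi' k h1 h2
      rw [hp, hμdef]
      linarith
    · exact fun j hj hA => hpos j hj hA
    · exact fun j hj hA => hneg j hj hA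
    · exact hfusedB
    · show Bb' e < Bb' (e-1)
      rw [hB'cast, hB'succ]
      linarith
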